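/- Let Δ be a 2-local derivation on M_n(A), n ≥ 2, vanishing on the span of the matrix units. Then for all i, j and all x ∈ e_{i,i}M_n(A)e_{i,i}, one has e_{j,i}Δ(x)e_{i,j} = Δ(e_{j,i} x e_{i,j}). -/

import Mathlib

open Matrix

def IsDerivation {A : Type*} [Ring A] [Algebra ℂ A] (D : A → A) : Prop :=
  (∀ x y, D (x + y) = D x + D y) ∧ (∀ (c : ℂ) (x), D (c • x) = c • D x) ∧
  (∀ x y, D (x * y) = D x * y + x * D y)

def Is2LocalDerivation {A : Type*} [Ring A] [Algebra ℂ A] (Δ : A → A) : Prop :=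
  ∀ x y, ∃ D, IsDerivation D ∧ Δ x = D x ∧ Δ y = D y

def HasInnerDerivationProperty (A : Type*) [Ring A] [Algebra ℂ A] : Prop :=
  ∀ D : A → A, IsDerivation D → ∃ a : A, ∀ x, D x = a * x - x * a

/-- `Δ` vanishes on the linear span of the matrix units. -/
def VanishesOnUnits {A : Type*} [Ring A] [Algebra ℂ A] {n : ℕ}
    (Δ : Matrix (Fin n) (Fin n) A → Matrix (Fin n) (Fin n) A) : Prop :=
  ∀ x ∈ Submodule.span ℂ (Set.range fun p : Fin n × Fin n =>
      Matrix.single p.1 p.2 (1 : A)), Δ x = 0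
theorem stmt8 {A : Type*} [NormedRing A] [NormedAlgebra ℂ A] [CompleteSpace A]
    (hidp : HasInnerDerivationProperty A) {n : ℕ} (hn : 2 ≤ n)
    (Δ : Matrix (Fin n) (Fin n) A → Matrix (Fin n) (Fin n) A)
    (hΔ : Is2LocalDerivation Δ) (hvan : VanishesOnUnits Δ) :
    ∀ (i j : Fin n) (x : Matrix (Fin n) (Fin n) A),
      x = Matrix.single i i (1 : A) * x * Matrix.single i i (1 : A) →
      Matrix.single j i (1 : A) * Δ x * Matrix.single i j (1 : A) =
        Δ (Matrix.single j i (1 : A) * x * Matrix.single i j (1 : A)) := by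
  intro i j x hx
  have hunit : ∀ p q : Fin n, Δ (Matrix.single p q (1 : A)) = 0 := fun p q =>
    hvan _ (Submodule.subset_span ⟨(p, q), rfl⟩)
  -- Key lemma: if w is concentrated in the (p,p) corner, then so is Δ w.
  have keyA : ∀ (p : Fin n) (w : Matrix (Fin n) (Fin n) A),
      w = Matrix.single p p (1 : A) * w * Matrix.single p p (1 : A) →
      Matrix.single p p (1 : A) * Δ w * Matrix.single p p (1 : A) = Δ w := by
    intro p w hw
    obtain ⟨D, hD, h1, h2⟩ := hΔ w (Matrix.single p p (1 : A))
    have hDp : D (Matrix.single p p (1 : A)) = 0 := by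
      rw [← h2]; exact hunit p p
    rw [h1]
    conv_rhs => rw [hw]
    rw [hD.2.2, hD.2.2, hDp, zero_mul, zero_add, mul_zero, add_zero]
  rcases eq_or_ne i j with rfl | hij
  · rw [← hx]; exact keyA i x hx
  -- Notation
  set Eii := Matrix.single i i (1 : A) with hEii
  set Ejj := Matrix.single j j (1 : A) with hEjj
  set Eij := Matrix.single i j (1 : A) with hEij
  set Eji := Matrix.single j i (1 : A) with hEji
  -- unit products
  have Pii : Eii * Eii = Eii := by simp [hEii]
  have Pji_ii : Eji * Eii = Eji := by simp [hEji, hEii]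
  have Pii_ij : Eii * Eij = Eij := by simp [hEii, hEij]
  have Pjj_ji : Ejj * Eji = Eji := by simp [hEjj, hEji]
  have Pij_jj : Eij * Ejj = Eij := by simp [hEij, hEjj]
  have Pij_ji : Eij * Eji = Eii := by simp [hEij, hEji, hEii]
  have Zij_ii : Eij * Eii = 0 := by
    rw [hEij, hEii]; exact Matrix.single_mul_single_of_ne _ _ _ _ (Ne.symm hij) _
  have Zii_ji : Eii * Eji = 0 := by
    rw [hEii, hEji]; exact Matrix.single_mul_single_of_ne _ _ _ _ (hij) _
  have Zji_jj : Eji * Ejj = 0 := by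
    rw [hEji, hEjj]; exact Matrix.single_mul_single_of_ne _ _ _ _ (hij) _
  have Zjj_ij : Ejj * Eij = 0 := by
    rw [hEjj, hEij]; exact Matrix.single_mul_single_of_ne _ _ _ _ (Ne.symm hij) _
  have Zij_ij : Eij * Eij = 0 := by
    rw [hEij]; exact Matrix.single_mul_single_of_ne _ _ _ _ (Ne.symm hij) _
  have Zji_ji : Eji * Eji = 0 := by
    rw [hEji]; exact Matrix.single_mul_single_of_ne _ _ _ _ (hij) _
  have Zii_jj : Eii * Ejj = 0 := by
    rw [hEii, hEjj]; exact Matrix.single_mul_single_of_ne _ _ _ _ (hij) _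
  have Zjj_ii : Ejj * Eii = 0 := by
    rw [hEjj, hEii]; exact Matrix.single_mul_single_of_ne _ _ _ _ (Ne.symm hij) _
  have Zii_jjM : ∀ M : Matrix (Fin n) (Fin n) A, Eii * (Ejj * M) = 0 := by
    intro M; rw [← mul_assoc, Zii_jj, zero_mul]
  have Zjj_iiM : ∀ M : Matrix (Fin n) (Fin n) A, Ejj * (Eii * M) = 0 := by
    intro M; rw [← mul_assoc, Zjj_ii, zero_mul]
  -- facts about x
  have bx1 : Eii * x = x := by
    nth_rewrite 1 [hx]; rw [← mul_assoc, ← mul_assoc, Pii]; exact hx.symm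
  have bx2 : x * Eii = x := by
    nth_rewrite 1 [hx]; rw [mul_assoc, Pii]; exact hx.symm
  have zx1 : Eij * x = 0 := by
    rw [← bx1, ← mul_assoc, Zij_ii, zero_mul]
  have zx2 : x * Eji = 0 := by
    rw [← bx2, mul_assoc, Zii_ji, mul_zero]
  -- y, z, u
  set y := Eji * x * Eij with hy
  set z := x + y with hz
  set u := Eij + Eji with hu
  have yb1 : Ejj * y = y := by rw [hy, ← mul_assoc, ← mul_assoc, Pjj_ji]
  have yb2 : y * Ejj = y := by rw [hy, mul_assoc, Pij_jj]
  have hyjj : y = Ejj * y * Ejj := by rw [yb1, yb2]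
  have hΔu : Δ u = 0 := by
    rw [hu, hEij, hEji]
    exact hvan _ (Submodule.add_mem _ (Submodule.subset_span ⟨(i, j), rfl⟩)
      (Submodule.subset_span ⟨(j, i), rfl⟩))
  have keyAx : Eii * Δ x * Eii = Δ x := by
    rw [hEii]; exact keyA i x (hEii ▸ hx)
  have keyAy : Ejj * Δ y * Ejj = Δ y := by
    rw [hEjj]; exact keyA j y (hEjj ▸ hyjj)
  -- Step B : compress Δ z at (i,i)
  have stepB : Eii * Δ z * Eii = Eii * Δ x * Eii := by
    obtain ⟨D, hD, hDz, hDx⟩ := hΔ z x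
    have hsum : D z = D x + D y := by rw [hz]; exact hD.1 x y
    have EDy : Eii * D y * Eii = 0 := by
      nth_rewrite 1 [hyjj]
      rw [hD.2.2, hD.2.2]
      simp only [mul_add, add_mul, mul_assoc, Zjj_ii, Zii_jjM, mul_zero, zero_mul,
        add_zero, zero_add]
    rw [hDz, hDx, hsum, mul_add, add_mul, EDy, add_zero]
  -- Step B' : compress Δ z at (j,j)
  have stepB' : Ejj * Δ z * Ejj = Ejj * Δ y * Ejj := by
    obtain ⟨D, hD, hDz, hDy⟩ := hΔ z y
    have hsum : D z = D x + D y := by rw [hz]; exact hD.1 x y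
    have EDx : Ejj * D x * Ejj = 0 := by
      nth_rewrite 1 [hx]
      rw [hD.2.2, hD.2.2]
      simp only [mul_add, add_mul, mul_assoc, Zii_jj, Zjj_iiM, mul_zero, zero_mul,
        add_zero, zero_add]
    rw [hDz, hDy, hsum, mul_add, add_mul, EDx, zero_add]
  -- Step C : Δ z = u * Δ z * u
  have huxu : u * x * u = y := by
    rw [hu, add_mul, zx1, zero_add, mul_add (Eji * x) Eij Eji, mul_assoc Eji x Eji,
      zx2, mul_zero, add_zero]
  have huyu : u * y * u = x := by
    have e1 : Eij * y = x * Eij := by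
      rw [hy, ← mul_assoc, ← mul_assoc, Pij_ji, bx1]
    have e2 : Eji * y = 0 := by
      rw [hy, ← mul_assoc, ← mul_assoc, Zji_ji, zero_mul, zero_mul]
    rw [hu, add_mul, e1, e2, add_zero, mul_add (x * Eij) Eij Eji,
      mul_assoc x Eij Eij, Zij_ij, mul_zero, zero_add, mul_assoc x Eij Eji, Pij_ji, bx2]
  have huzu : z = u * z * u := by
    rw [hz, mul_add u x y, add_mul, huxu, huyu]
    exact add_comm x y
  have stepC : Δ z = u * Δ z * u := by
    obtain ⟨D, hD, hDz, hDu⟩ := hΔ z u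
    have hDu0 : D u = 0 := by rw [← hDu]; exact hΔu
    rw [hDz]
    nth_rewrite 1 [huzu]
    rw [hD.2.2, hD.2.2, hDu0, zero_mul, zero_add, mul_zero, add_zero]
  have hEjju : Ejj * u = Eji := by rw [hu, mul_add, Zjj_ij, zero_add, Pjj_ji]
  have huEjj : u * Ejj = Eij := by rw [hu, add_mul, Pij_jj, Zji_jj, add_zero]
  -- final chain
  calc Eji * Δ x * Eij
      = Eji * (Eii * Δ z * Eii) * Eij := by rw [stepB, keyAx]
    _ = Eji * Δ z * Eij := by
        rw [← mul_assoc Eji (Eii * Δ z) Eii, ← mul_assoc Eji Eii (Δ z), Pji_ii,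
          mul_assoc (Eji * Δ z) Eii Eij, Pii_ij]
    _ = Ejj * Δ z * Ejj := by
        conv_rhs => rw [stepC]
        rw [← mul_assoc Ejj (u * Δ z) u, ← mul_assoc Ejj u (Δ z), hEjju,
          mul_assoc (Eji * Δ z) u Ejj, huEjj]
    _ = Ejj * Δ y * Ejj := stepB'
    _ = Δ y := keyAy
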